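/- Let n ≥ 1. The closing number of the class of closed halfspaces on ℝ^n is n + 1: there exist n + 1 closed halfspaces in ℝ^n whose intersection has positive finite Lebesgue measure (for instance the n halfspaces {x : x_i ≥ 0} together with {x : 1 − Σ_i x_i ≥ 0}, whose intersection is the standard n-simplex), and no intersection of at most n closed halfspaces in ℝ^n has positive finite Lebesgue measure. -/

import Mathlib

open MeasureTheory

/-- Dot product of two vectors in ℝⁿ. -/
noncomputable def dotp {n : ℕ} (w x : Fin n → ℝ) : ℝ := ∑ i, w i * x i

lemma dotp_add {n : ℕ} (w x y : Fin n → ℝ) : dotp w (x + y) = dotp w x + dotp w y := by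
  simp [dotp, mul_add, Finset.sum_add_distrib]

lemma dotp_smul {n : ℕ} (w : Fin n → ℝ) (c : ℝ) (x : Fin n → ℝ) :
    dotp w (c • x) = c * dotp w x := by
  simp [dotp, Finset.mul_sum, mul_left_comm]

lemma dotp_single {n : ℕ} (j : Fin n) (x : Fin n → ℝ) : dotp (Pi.single j 1) x = x j := by
  simp [dotp, Pi.single_apply, ite_mul]

lemma dotp_neg_one {n : ℕ} (x : Fin n → ℝ) : dotp (fun _ => -1) x = -∑ i, x i := by
  simp [dotp]

lemma continuous_dotp {n : ℕ} (w : Fin n → ℝ) : Continuous fun x : Fin n → ℝ => dotp w x := by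
  unfold dotp
  exact continuous_finset_sum _ fun i _ => continuous_const.mul (continuous_apply i)

lemma exists_dual_vec {n k : ℕ} (hn : 1 ≤ n) (hk : k ≤ n) (w : Fin k → Fin n → ℝ) :
    ∃ v : Fin n → ℝ, v ≠ 0 ∧ ∀ i, 0 ≤ dotp (w i) v := by
  by_cases hker : ∃ v : Fin n → ℝ, v ≠ 0 ∧ ∀ i, dotp (w i) v = 0
  · obtain ⟨v, hv0, hv⟩ := hker
    exact ⟨v, hv0, fun i => (hv i).ge⟩
  push_neg at hker
  have hnk : n ≤ k := by
    let A : (Fin n → ℝ) →ₗ[ℝ] (Fin k → ℝ) :=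
      { toFun := fun x i => dotp (w i) x
        map_add' := fun x y => funext fun i => dotp_add _ _ _
        map_smul' := fun c x => funext fun i => dotp_smul _ _ _ }
    have hinj : Function.Injective A := by
      rw [← LinearMap.ker_eq_bot, LinearMap.ker_eq_bot']
      intro x hx
      by_contra hx0
      obtain ⟨i, hi⟩ := hker x hx0
      exact hi (congrFun hx i)
    simpa [Module.finrank_fin_fun] using LinearMap.finrank_le_finrank_of_injective hinj
  have hkn : k = n := le_antisymm hk hnk
  subst hkn
  let A : (Fin k → ℝ) →ₗ[ℝ] (Fin k → ℝ) :=
    { toFun := fun x i => dotp (w i) x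
      map_add' := fun x y => funext fun i => dotp_add _ _ _
      map_smul' := fun c x => funext fun i => dotp_smul _ _ _ }
  have hinj : Function.Injective A := by
    rw [← LinearMap.ker_eq_bot, LinearMap.ker_eq_bot']
    intro x hx
    by_contra hx0
    obtain ⟨i, hi⟩ := hker x hx0
    exact hi (congrFun hx i)
  have hsurj : Function.Surjective A := LinearMap.injective_iff_surjective.mp hinj
  obtain ⟨v, hAv⟩ := hsurj (fun _ => 1)
  refine ⟨v, ?_, fun i => ?_⟩
  · rintro rfl
    rw [map_zero] at hAv
    exact one_ne_zero (congrFun hAv ⟨0, hn⟩).symm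
  · show (0 : ℝ) ≤ A v i
    rw [hAv]
    norm_num

/-- For `n ≥ 1`, the closing number of the class of closed halfspaces on ℝⁿ is
`n + 1`: there exist `n + 1` closed halfspaces whose intersection has positive
finite Lebesgue measure, while no family of at most `n` closed halfspaces has an
intersection of positive finite Lebesgue measure. -/
theorem closing_number_halfspaces (n : ℕ) (hn : 1 ≤ n) :
    (∃ w : Fin (n + 1) → (Fin n → ℝ), ∃ b : Fin (n + 1) → ℝ,
      0 < volume (⋂ i, {x : Fin n → ℝ | 0 ≤ dotp (w i) x + b i}) ∧
      volume (⋂ i, {x : Fin n → ℝ | 0 ≤ dotp (w i) x + b i}) < ⊤) ∧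
    (∀ k : ℕ, k ≤ n → ∀ w : Fin k → (Fin n → ℝ), ∀ b : Fin k → ℝ,
      ¬ (0 < volume (⋂ i, {x : Fin n → ℝ | 0 ≤ dotp (w i) x + b i}) ∧
         volume (⋂ i, {x : Fin n → ℝ | 0 ≤ dotp (w i) x + b i}) < ⊤)) := by
  constructor
  · -- existence: the standard simplex
    refine ⟨Fin.snoc (fun j => Pi.single j 1) (fun _ => -1), Fin.snoc (fun _ => 0) 1, ?_, ?_⟩
    · -- positive volume: contains the box [0, 1/n]^n
      refine lt_of_lt_of_le ?_ (measure_mono ?_ :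
        volume (Set.pi Set.univ fun _ : Fin n => Set.Icc (0:ℝ) (1/n)) ≤ _)
      · rw [volume_pi_pi]
        simp only [Real.volume_Icc, sub_zero, Finset.prod_const]
        refine ENNReal.pow_pos ?_ _
        rw [ENNReal.ofReal_pos]
        positivity
      · intro x hx
        simp only [Set.mem_pi, Set.mem_univ, Set.mem_Icc, forall_true_left] at hx
        rw [Set.mem_iInter]
        intro i
        refine Fin.lastCases ?_ ?_ i
        · simp only [Set.mem_setOf_eq, Fin.snoc_last, dotp_neg_one]
          have hsum : ∑ j, x j ≤ 1 := by
            calc ∑ j, x j ≤ ∑ _j : Fin n, (1 / n : ℝ) :=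
                  Finset.sum_le_sum fun j _ => (hx j).2
            _ = 1 := by
                  rw [Finset.sum_const]
                  simp only [Finset.card_univ, Fintype.card_fin, nsmul_eq_mul]
                  field_simp
          linarith
        · intro j
          simp only [Set.mem_setOf_eq, Fin.snoc_castSucc, dotp_single, add_zero]
          exact (hx j).1
    · -- finite volume: contained in the box [0, 1]^n
      refine lt_of_le_of_lt (measure_mono ?_ :
        _ ≤ volume (Set.pi Set.univ fun _ : Fin n => Set.Icc (0:ℝ) 1)) ?_
      · intro x hx
        rw [Set.mem_iInter] at hx
        have hnn : ∀ j, 0 ≤ x j := by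
          intro j
          have := hx (Fin.castSucc j)
          simpa [Fin.snoc_castSucc, dotp_single] using this
        have hsum : ∑ j, x j ≤ 1 := by
          have := hx (Fin.last n)
          simp only [Set.mem_setOf_eq, Fin.snoc_last, dotp_neg_one] at this
          linarith
        intro j _
        refine ⟨hnn j, ?_⟩
        calc x j ≤ ∑ i, x i := Finset.single_le_sum (fun i _ => hnn i) (Finset.mem_univ j)
        _ ≤ 1 := hsum
      · rw [volume_pi_pi]
        simp [Real.volume_Icc]
  · -- no family of at most n halfspaces works
    rintro k hk w b ⟨hpos, hfin⟩
    set S := ⋂ i, {x : Fin n → ℝ | 0 ≤ dotp (w i) x + b i} with hS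
    obtain ⟨v, hv0, hv⟩ := exists_dual_vec hn hk w
    have hconv : Convex ℝ S := by
      refine convex_iInter fun i => ?_
      intro x hx y hy a c ha hc hac
      simp only [Set.mem_setOf_eq] at hx hy ⊢
      rw [dotp_add, dotp_smul, dotp_smul]
      have key : a * dotp (w i) x + c * dotp (w i) y + b i
          = a * (dotp (w i) x + b i) + c * (dotp (w i) y + b i) := by
        linear_combination (-(b i)) * hac
      rw [key]
      exact add_nonneg (mul_nonneg ha hx) (mul_nonneg hc hy)
    -- S has an interior point
    have hint : (interior S).Nonempty := by
      by_contra h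
      rw [Set.not_nonempty_iff_eq_empty] at h
      have hspan : affineSpan ℝ S ≠ ⊤ := by
        intro htop
        have h2 := hconv.interior_nonempty_iff_affineSpan_eq_top.mpr htop
        rw [h] at h2
        exact Set.not_nonempty_empty h2
      have h0 : volume S = 0 := by
        refine measure_mono_null (subset_affineSpan ℝ S) ?_
        exact Measure.addHaar_affineSubspace volume _ hspan
      rw [h0] at hpos
      exact lt_irrefl _ hpos
    obtain ⟨x₀, hx₀⟩ := hint
    obtain ⟨ε, hε, hball⟩ := Metric.isOpen_iff.mp isOpen_interior x₀ hx₀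
    replace hball : Metric.ball x₀ ε ⊆ S := hball.trans interior_subset
    -- shifting along v stays in S
    have hshift : ∀ x ∈ S, ∀ t : ℝ, 0 ≤ t → x + t • v ∈ S := by
      intro x hx t ht
      rw [hS, Set.mem_iInter] at hx ⊢
      intro i
      have h1 := hx i
      simp only [Set.mem_setOf_eq] at h1 ⊢
      rw [dotp_add, dotp_smul]
      have : 0 ≤ t * dotp (w i) v := mul_nonneg ht (hv i)
      linarith
    have hvnorm : (0 : ℝ) < ‖v‖ := norm_pos_iff.mpr hv0
    set u : ℝ := 3 * ε / ‖v‖ with hu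
    have hu0 : 0 ≤ u := by positivity
    set c : ℕ → (Fin n → ℝ) := fun m => x₀ + ((m : ℝ) * u) • v with hc
    have hballs : ∀ m : ℕ, Metric.ball (c m) ε ⊆ S := by
      intro m y hy
      have hy' : y - ((m : ℝ) * u) • v ∈ Metric.ball x₀ ε := by
        simp only [Metric.mem_ball] at hy ⊢
        rw [dist_eq_norm] at hy ⊢
        convert hy using 2
        rw [hc]
        rw [sub_sub, add_comm]
      have := hshift _ (hball hy') ((m : ℝ) * u) (by positivity)
      convert this using 1
      abel
    have hdisj : Pairwise (Function.onFun Disjoint fun m => Metric.ball (c m) ε) := by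
      intro m m' hmm'
      refine Metric.ball_disjoint_ball ?_
      rw [dist_eq_norm]
      have hcc : c m - c m' = (((m : ℝ) - m') * u) • v := by
        rw [hc]
        simp only [sub_smul]
        module
      rw [hcc, norm_smul, Real.norm_eq_abs]
      have h1 : (1 : ℝ) ≤ |(m : ℝ) - m'| := by
        have hz : ((m : ℤ) - m') ≠ 0 := sub_ne_zero.mpr (by exact_mod_cast hmm')
        have h2 : (1 : ℤ) ≤ |(m : ℤ) - m'| := Int.one_le_abs hz
        calc (1 : ℝ) ≤ ((|(m : ℤ) - m'| : ℤ) : ℝ) := by exact_mod_cast h2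
        _ = |(m : ℝ) - m'| := by push_cast; try ring_nf
      have habs : |((m : ℝ) - m') * u| = |(m : ℝ) - m'| * u := by
        rw [abs_mul, abs_of_nonneg hu0]
      rw [habs]
      have : |(m : ℝ) - m'| * u * ‖v‖ = |(m : ℝ) - m'| * (3 * ε) := by
        rw [hu]
        field_simp
      rw [this]
      have h2 : 1 * (3 * ε) ≤ |(m : ℝ) - m'| * (3 * ε) := by
        apply mul_le_mul_of_nonneg_right h1
        linarith
      linarith
    have hUsub : (⋃ m : ℕ, Metric.ball (c m) ε) ⊆ S := Set.iUnion_subset hballs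
    have hmeas : volume (⋃ m : ℕ, Metric.ball (c m) ε) = ∑' m : ℕ, volume (Metric.ball (c m) ε) :=
      measure_iUnion hdisj fun m => measurableSet_ball
    have hcenter : ∀ m : ℕ, volume (Metric.ball (c m) ε) = volume (Metric.ball (0 : Fin n → ℝ) ε) :=
      fun m => Measure.addHaar_ball_center volume (c m) ε
    have htop : volume (⋃ m : ℕ, Metric.ball (c m) ε) = ⊤ := by
      rw [hmeas]
      have : ∀ m : ℕ, volume (Metric.ball (c m) ε) = volume (Metric.ball (0 : Fin n → ℝ) ε) :=
        hcenter
      rw [tsum_congr this]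
      exact ENNReal.tsum_const_eq_top_of_ne_zero (Metric.measure_ball_pos volume 0 hε).ne'
    have : (⊤ : ENNReal) ≤ volume S := htop ▸ measure_mono hUsub
    exact absurd (lt_of_le_of_lt this hfin) (lt_irrefl _)
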